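/- Let a > 0 and λ > 0 with λ ≠ a, let w(x) = e^{−a} a^x / x! be the Poisson weight on ℕ, and let p(x) = e^{−λ} λ^x / x!. Then for every m ∈ ℕ, Σ_{k=0}^{m} a^{−k} Σ_{x=0}^∞ (x!/(x−k)!) · p(x)² / w(x) = ((1 − (λ/a)^{2(m+1)})/(1 − (λ/a)²)) · exp((a−λ)²/a). -/

import Mathlib

open scoped BigOperators

lemma desc_tsum (t : ℝ) (k : ℕ) :
    ∑' x : ℕ, (x.descFactorial k : ℝ) * t ^ x / x.factorial = t ^ k * Real.exp t := by
  have hinj : Function.Injective (fun n : ℕ => n + k) := add_left_injective k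
  have hsupp : Function.support (fun x : ℕ => (x.descFactorial k : ℝ) * t ^ x / x.factorial)
      ⊆ Set.range (fun n : ℕ => n + k) := by
    intro x hx
    by_contra hxr
    have hxk : x < k := by
      by_contra h
      exact hxr ⟨x - k, by simp only []; omega⟩
    apply hx
    simp [Nat.descFactorial_eq_zero_iff_lt.2 hxk]
  have key := hinj.tsum_eq (f := fun x : ℕ => (x.descFactorial k : ℝ) * t ^ x / x.factorial) hsupp
  rw [← key]
  have hterm : ∀ n : ℕ, ((n + k).descFactorial k : ℝ) * t ^ (n + k) / (n + k).factorial
      = t ^ k * (t ^ n / n.factorial) := by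
    intro n
    have h1 : (n.factorial : ℝ) * ((n + k).descFactorial k : ℝ) = ((n + k).factorial : ℝ) := by
      have := Nat.factorial_mul_descFactorial (Nat.le_add_left k n)
      simp only [Nat.add_sub_cancel] at this
      exact_mod_cast this
    have hf1 : (n.factorial : ℝ) ≠ 0 := Nat.cast_ne_zero.2 n.factorial_ne_zero
    have hf2 : ((n + k).factorial : ℝ) ≠ 0 := Nat.cast_ne_zero.2 (n + k).factorial_ne_zero
    rw [pow_add]
    field_simp
    linear_combination (t ^ n * t ^ k) * h1
  simp only [hterm]
  rw [tsum_mul_left]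
  congr 1
  rw [Real.exp_eq_exp_ℝ, NormedSpace.exp_eq_tsum_div]

theorem stmt_10 (a lam : ℝ) (ha : 0 < a) (hlam : 0 < lam) (hne : lam ≠ a)
    (w : ℕ → ℝ) (hw : ∀ x : ℕ, w x = Real.exp (-a) * a ^ x / x.factorial)
    (p : ℕ → ℝ) (hp : ∀ x : ℕ, p x = Real.exp (-lam) * lam ^ x / x.factorial)
    (m : ℕ) :
    ∑ k ∈ Finset.range (m + 1), a ^ (-(k : ℤ)) *
        ∑' x : ℕ, (x.descFactorial k : ℝ) * p x ^ 2 / w x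
      = ((1 - (lam / a) ^ (2 * (m + 1))) / (1 - (lam / a) ^ 2)) *
          Real.exp ((a - lam) ^ 2 / a) := by
  set t : ℝ := lam ^ 2 / a with ht
  set C : ℝ := Real.exp (a - 2 * lam) with hC
  have ha' : a ≠ 0 := ne_of_gt ha
  have hx : ∀ k x : ℕ, (x.descFactorial k : ℝ) * p x ^ 2 / w x
      = C * ((x.descFactorial k : ℝ) * t ^ x / x.factorial) := by
    intro k x
    rw [hp, hw, hC, ht]
    have hfac : (x.factorial : ℝ) ≠ 0 := Nat.cast_ne_zero.2 x.factorial_ne_zero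
    have hax : a ^ x ≠ 0 := pow_ne_zero _ ha'
    have hea : Real.exp (-a) ≠ 0 := Real.exp_ne_zero _
    have h2 : Real.exp (a - 2 * lam) = Real.exp a / (Real.exp lam) ^ 2 := by
      rw [Real.exp_sub]
      congr 1
      rw [two_mul, Real.exp_add, sq]
    rw [h2, Real.exp_neg a, Real.exp_neg lam, div_pow, div_pow, mul_pow]
    have helam : Real.exp lam ≠ 0 := Real.exp_ne_zero _
    have hea' : Real.exp a ≠ 0 := Real.exp_ne_zero _
    field_simp
    ring
  have hsum : ∀ k : ℕ, ∑' x : ℕ, (x.descFactorial k : ℝ) * p x ^ 2 / w x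
      = C * (t ^ k * Real.exp t) := by
    intro k
    simp only [hx k]
    rw [tsum_mul_left, desc_tsum]
  simp only [hsum]
  have hpow : ∀ k : ℕ, a ^ (-(k : ℤ)) * (C * (t ^ k * Real.exp t))
      = (C * Real.exp t) * ((lam / a) ^ 2) ^ k := by
    intro k
    rw [zpow_neg, zpow_natCast, ht, div_pow, div_pow, div_pow]
    field_simp
    ring
  simp only [hpow]
  rw [← Finset.mul_sum]
  have hr1 : (lam / a) ^ 2 ≠ 1 := by
    intro h
    have hpos : 0 < lam / a := div_pos hlam ha
    have : lam / a = 1 := by nlinarith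
    exact hne (by field_simp at this; linarith)
  rw [geom_sum_eq hr1]
  have hgeo : ((lam / a) ^ 2) ^ (m + 1) = (lam / a) ^ (2 * (m + 1)) := by
    rw [pow_mul]
  have hCE : C * Real.exp t = Real.exp ((a - lam) ^ 2 / a) := by
    rw [hC, ht, ← Real.exp_add]
    congr 1
    field_simp
    ring
  rw [hCE, hgeo]
  rw [mul_comm]
  congr 1
  rw [div_eq_div_iff (by intro h; apply hr1; nlinarith [sub_eq_zero.1 (by linarith : (lam/a)^2 - 1 = 0)]) (by intro h; apply hr1; nlinarith [sub_eq_zero.1 (by linarith : 1 - (lam/a)^2 = 0)])]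
  ring
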